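/- For all real numbers b and c with 1 < b < c one has log(√(c−1) + √c) / log(√(b−1) + √b) < log c / log b; equivalently, the function x ↦ log(√x + √(x−1)) / log x is strictly decreasing for x > 1. -/

import Mathlib

open Real

lemma core_ineq (u v : ℝ) (hu : 0 < u) (huv : u < v) :
    Real.log (Real.cosh u) / u < Real.log (Real.cosh v) / v := by
  have hv : 0 < v := hu.trans huv
  set l : ℝ := u / v with hl
  have hl0 : 0 < l := div_pos hu hv
  have hl1 : l < 1 := (div_lt_one hv).2 huv
  have hvl : v * l = u := by rw [hl]; field_simp [hv.ne']
  have hconc := Real.strictConcaveOn_rpow hl0 hl1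
  have hne : Real.exp v ≠ Real.exp (-v) := by
    intro h
    have := Real.exp_injective h
    linarith
  have h2 := hconc.2 (Set.mem_Ici.2 (Real.exp_pos v).le)
      (Set.mem_Ici.2 (Real.exp_pos (-v)).le) hne
      (show (0:ℝ) < 1/2 by norm_num) (show (0:ℝ) < 1/2 by norm_num)
      (show (1:ℝ)/2 + 1/2 = 1 by norm_num)
  have hexp1 : Real.exp v ^ l = Real.exp u := by
    rw [← Real.exp_log (Real.exp_pos v), ← Real.exp_mul, Real.log_exp, hvl]
  have hexp2 : Real.exp (-v) ^ l = Real.exp (-u) := by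
    rw [← Real.exp_log (Real.exp_pos (-v)), ← Real.exp_mul, Real.log_exp]
    congr 1
    rw [neg_mul, hvl]
  have key : Real.cosh u < Real.cosh v ^ l := by
    simp only [smul_eq_mul] at h2
    rw [hexp1, hexp2] at h2
    have e1 : (1/2 : ℝ) * Real.exp v + (1/2 : ℝ) * Real.exp (-v) = Real.cosh v := by
      rw [Real.cosh_eq]; ring
    rw [e1] at h2
    calc Real.cosh u = (1/2 : ℝ) * Real.exp u + (1/2 : ℝ) * Real.exp (-u) := by
          rw [Real.cosh_eq]; ring
      _ < Real.cosh v ^ l := h2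
  have hcu : (0:ℝ) < Real.cosh u := Real.cosh_pos u
  have hlog : Real.log (Real.cosh u) < l * Real.log (Real.cosh v) := by
    have := Real.log_lt_log hcu key
    rwa [Real.log_rpow (Real.cosh_pos v)] at this
  rw [div_lt_div_iff₀ hu hv]
  have h3 := mul_lt_mul_of_pos_right hlog hv
  calc Real.log (Real.cosh u) * v < l * Real.log (Real.cosh v) * v := h3
    _ = Real.log (Real.cosh v) * u := by rw [hl]; field_simp

lemma cosh_log_s (b : ℝ) (hb : 1 < b) :
    Real.cosh (Real.log (Real.sqrt (b - 1) + Real.sqrt b)) = Real.sqrt b := by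
  have hb0 : (0:ℝ) ≤ b := by linarith
  have hb1 : (0:ℝ) ≤ b - 1 := by linarith
  have hsb : (1:ℝ) < Real.sqrt b := by
    rw [show (1:ℝ) = Real.sqrt 1 by simp]
    exact Real.sqrt_lt_sqrt (by norm_num) hb
  have hs0 : (0:ℝ) < Real.sqrt (b - 1) + Real.sqrt b := by
    have := Real.sqrt_nonneg (b - 1); linarith
  rw [Real.cosh_log hs0]
  have hsq1 : Real.sqrt b ^ 2 = b := Real.sq_sqrt hb0
  have hsq2 : Real.sqrt (b - 1) ^ 2 = b - 1 := Real.sq_sqrt hb1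
  have hmul : (Real.sqrt (b - 1) + Real.sqrt b) * (Real.sqrt b - Real.sqrt (b - 1)) = 1 := by
    nlinarith [hsq1, hsq2]
  have hinv : (Real.sqrt (b - 1) + Real.sqrt b)⁻¹ = Real.sqrt b - Real.sqrt (b - 1) :=
    inv_eq_of_mul_eq_one_right hmul
  rw [hinv]; ring

lemma key_mono (b c : ℝ) (hb : 1 < b) (hbc : b < c) :
    Real.log (Real.sqrt (c - 1) + Real.sqrt c) / Real.log c <
      Real.log (Real.sqrt (b - 1) + Real.sqrt b) / Real.log b := by
  have hc : 1 < c := hb.trans hbc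
  set u := Real.log (Real.sqrt (b - 1) + Real.sqrt b) with hu_def
  set v := Real.log (Real.sqrt (c - 1) + Real.sqrt c) with hv_def
  have hsb : (1:ℝ) < Real.sqrt (b - 1) + Real.sqrt b := by
    have h1 : (1:ℝ) < Real.sqrt b := by
      rw [show (1:ℝ) = Real.sqrt 1 by simp]; exact Real.sqrt_lt_sqrt (by norm_num) hb
    have := Real.sqrt_nonneg (b - 1); linarith
  have hsc : Real.sqrt (b - 1) + Real.sqrt b < Real.sqrt (c - 1) + Real.sqrt c := by
    have h1 : Real.sqrt (b - 1) < Real.sqrt (c - 1) :=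
      Real.sqrt_lt_sqrt (by linarith) (by linarith)
    have h2 : Real.sqrt b < Real.sqrt c := Real.sqrt_lt_sqrt (by linarith) hbc
    linarith
  have hu : 0 < u := Real.log_pos hsb
  have huv : u < v := Real.log_lt_log (by linarith) hsc
  have hcore := core_ineq u v hu huv
  rw [cosh_log_s b hb, cosh_log_s c hc] at hcore
  -- hcore : log √b / u < log √c / v
  have hlb : 0 < Real.log (Real.sqrt b) := Real.log_pos (by
    rw [show (1:ℝ) = Real.sqrt 1 by simp]; exact Real.sqrt_lt_sqrt (by norm_num) hb)
  have hlc : 0 < Real.log (Real.sqrt c) := Real.log_pos (by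
    rw [show (1:ℝ) = Real.sqrt 1 by simp]; exact Real.sqrt_lt_sqrt (by norm_num) hc)
  have hcross : Real.log (Real.sqrt b) * v < Real.log (Real.sqrt c) * u :=
    (div_lt_div_iff₀ hu (hu.trans huv)).1 hcore
  have hLb : Real.log b = 2 * Real.log (Real.sqrt b) := by
    rw [Real.log_sqrt (by linarith)]; ring
  have hLc : Real.log c = 2 * Real.log (Real.sqrt c) := by
    rw [Real.log_sqrt (by linarith)]; ring
  rw [div_lt_div_iff₀ (by rw [hLc]; linarith) (by rw [hLb]; linarith)]
  rw [hLb, hLc]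
  nlinarith [hcross]

theorem stmt7 :
    (∀ b c : ℝ, 1 < b → b < c →
      Real.log (Real.sqrt (c - 1) + Real.sqrt c) /
          Real.log (Real.sqrt (b - 1) + Real.sqrt b) <
        Real.log c / Real.log b) ∧
    StrictAntiOn
      (fun x : ℝ => Real.log (Real.sqrt x + Real.sqrt (x - 1)) / Real.log x)
      (Set.Ioi (1 : ℝ)) := by
  constructor
  · intro b c hb hbc
    have hc : 1 < c := hb.trans hbc
    have key := key_mono b c hb hbc
    have hsb : (1:ℝ) < Real.sqrt (b - 1) + Real.sqrt b := by
      have h1 : (1:ℝ) < Real.sqrt b := by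
        rw [show (1:ℝ) = Real.sqrt 1 by simp]; exact Real.sqrt_lt_sqrt (by norm_num) hb
      have := Real.sqrt_nonneg (b - 1); linarith
    have hlb : 0 < Real.log (Real.sqrt (b - 1) + Real.sqrt b) := Real.log_pos hsb
    have hLb : 0 < Real.log b := Real.log_pos hb
    have hLc : 0 < Real.log c := Real.log_pos hc
    rw [div_lt_div_iff₀ hlb hLb]
    have := (div_lt_div_iff₀ hLc hLb).1 key
    linarith [this]
  · intro b hb c hc hbc
    simp only [Set.mem_Ioi] at hb hc
    have key := key_mono b c hb hbc
    simp only []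
    rw [add_comm (Real.sqrt c) (Real.sqrt (c - 1)), add_comm (Real.sqrt b) (Real.sqrt (b - 1))]
    exact key
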